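/- Let κ be a field and A a prime algebra over κ which is reduced and not a field. Then A is isomorphic as a κ-algebra to κ × κ. -/

import Mathlib

/-- Let `κ` be a field and `A` a prime algebra over `κ` (i.e. `A ≠ 0`, `κ → A` is not
surjective, and the only `κ`-subalgebras of `A` are `κ` and `A`).  If `A` is reduced and
not a field, then `A ≅ κ × κ` as a `κ`-algebra. -/
theorem primeAlgebra_reduced_not_field_iso_prod
    (κ : Type*) [Field κ] (A : Type*) [CommRing A] [Algebra κ A]
    (hnt : Nontrivial A)
    (hns : ¬ Function.Surjective (algebraMap κ A))
    (hsub : ∀ S : Subalgebra κ A, S = ⊥ ∨ S = ⊤)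
    (hred : IsReduced A) (hnf : ¬ IsField A) :
    Nonempty (A ≃ₐ[κ] (κ × κ)) := by
  classical
  have hinj : Function.Injective (algebraMap κ A) := (algebraMap κ A).injective
  -- get a nonzero nonunit
  obtain ⟨a, ha0, hau⟩ : ∃ a : A, a ≠ 0 ∧ ¬ IsUnit a := by
    obtain ⟨a, ha0, hau⟩ := Ring.exists_not_isUnit_of_not_isField hnf
    exact ⟨a, ha0, hau⟩
  -- adjoin a = ⊤
  have hadj : Algebra.adjoin κ {a} = ⊤ := by
    rcases hsub (Algebra.adjoin κ {a}) with h | h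
    · exfalso
      have : a ∈ (⊥ : Subalgebra κ A) := h ▸ Algebra.self_mem_adjoin_singleton κ a
      obtain ⟨c, hc⟩ := Algebra.mem_bot.1 this
      have hc0 : c ≠ 0 := fun h0 => ha0 (by rw [← hc, h0, map_zero])
      exact hau (hc ▸ (IsUnit.map (algebraMap κ A) (isUnit_iff_ne_zero.2 hc0)))
    · exact h
  have hsurj : Function.Surjective (Polynomial.aeval a : Polynomial κ →ₐ[κ] A) := by
    intro x
    have : x ∈ (Polynomial.aeval a : Polynomial κ →ₐ[κ] A).range := by
      rw [← Algebra.adjoin_singleton_eq_range_aeval, hadj]; trivial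
    exact this
  -- a is algebraic
  have halg : IsAlgebraic κ a := by
    by_contra htr
    have htr : Transcendental κ a := htr
    rw [transcendental_iff] at htr
    rcases hsub (Algebra.adjoin κ {a ^ 2}) with h | h
    · have : a ^ 2 ∈ (⊥ : Subalgebra κ A) := h ▸ Algebra.self_mem_adjoin_singleton κ _
      obtain ⟨c, hc⟩ := Algebra.mem_bot.1 this
      have : (Polynomial.X ^ 2 - Polynomial.C c : Polynomial κ) = 0 := by
        apply htr
        simp [hc]
      have h2 : ((Polynomial.X ^ 2 - Polynomial.C c : Polynomial κ)).natDegree = 2 := by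
        compute_degree!
      rw [this] at h2
      simp at h2
    · have : a ∈ Algebra.adjoin κ {a ^ 2} := h ▸ Algebra.mem_top
      rw [Algebra.adjoin_singleton_eq_range_aeval] at this
      obtain ⟨p, hp'⟩ := this
      have hp : Polynomial.aeval (a ^ 2) p = a := hp'
      have hpc : Polynomial.aeval a (p.comp (Polynomial.X ^ 2) - Polynomial.X) = 0 := by
        rw [map_sub, Polynomial.aeval_comp]
        simp only [map_pow, Polynomial.aeval_X]
        rw [hp]; ring
      have h0 := htr _ hpc
      have : p.comp (Polynomial.X ^ 2) = Polynomial.X := by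
        have := sub_eq_zero.1 h0
        exact this
      have hdeg := congrArg Polynomial.natDegree this
      rw [Polynomial.natDegree_comp, Polynomial.natDegree_X_pow, Polynomial.natDegree_X] at hdeg
      omega
  have hint : IsIntegral κ a := halg.isIntegral
  set μ := minpoly κ a with hμ
  have hμ0 : μ ≠ 0 := minpoly.ne_zero hint
  have hμaeval : Polynomial.aeval a μ = 0 := minpoly.aeval κ a
  have hμu : ¬ IsUnit μ := minpoly.not_isUnit κ a
  -- μ is squarefree
  have hsf : Squarefree μ := by
    by_contra hq
    rw [Squarefree] at hq
    push_neg at hq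
    obtain ⟨q, hqd, hqu⟩ := hq
    obtain ⟨r, hr⟩ := hqd
    have hq0 : q ≠ 0 := by rintro rfl; exact hμ0 (by simpa using hr)
    have hr0 : r ≠ 0 := by rintro rfl; exact hμ0 (by simpa using hr)
    have hnil : IsNilpotent (Polynomial.aeval a (q * r)) := by
      refine ⟨2, ?_⟩
      rw [← map_pow]
      have : (q * r) ^ 2 = μ * r := by rw [hr]; ring
      rw [this, map_mul, hμaeval, zero_mul]
    have hz : Polynomial.aeval a (q * r) = 0 := hnil.eq_zero
    have hdvd : μ ∣ q * r := minpoly.dvd κ a hz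
    obtain ⟨t, ht⟩ := hdvd
    have : q * r * 1 = q * r * (q * t) := by
      calc q * r * 1 = q * r := by ring
        _ = q * q * r * t := by rw [← hr]; exact ht
        _ = q * r * (q * t) := by ring
    have := mul_left_cancel₀ (mul_ne_zero hq0 hr0) this
    exact hqu (IsUnit.of_mul_eq_one t this.symm)
  -- μ is not irreducible (else A is a field)
  have hirr : ¬ Irreducible μ := by
    intro hirr
    apply hnf
    refine ⟨hnt.exists_pair_ne, mul_comm, ?_⟩
    intro x hx
    obtain ⟨p, rfl⟩ := hsurj x
    have hndvd : ¬ μ ∣ p := by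
      rintro ⟨s, rfl⟩
      rw [map_mul, hμaeval, zero_mul] at hx
      exact hx rfl
    obtain ⟨u, v, huv⟩ := hirr.coprime_iff_not_dvd.2 hndvd
    refine ⟨Polynomial.aeval a v, ?_⟩
    have := congrArg (Polynomial.aeval a) huv
    rw [map_add, map_mul, map_mul, hμaeval, mul_zero, zero_add, map_one] at this
    rw [mul_comm] at this
    exact this
  -- factor μ = f * g nontrivially
  rw [irreducible_iff] at hirr
  push_neg at hirr
  obtain ⟨f, g, hfg, hfu, hgu⟩ := hirr hμu
  have hf0 : f ≠ 0 := by rintro rfl; exact hμ0 (by simpa using hfg)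
  have hg0 : g ≠ 0 := by rintro rfl; exact hμ0 (by simpa using hfg)
  -- f and g are coprime
  have hcop : IsCoprime f g := by
    rw [← EuclideanDomain.gcd_isUnit_iff]
    apply hsf
    have h1 : EuclideanDomain.gcd f g ∣ f := EuclideanDomain.gcd_dvd_left f g
    have h2 : EuclideanDomain.gcd f g ∣ g := EuclideanDomain.gcd_dvd_right f g
    rw [hfg]
    exact mul_dvd_mul h1 h2
  obtain ⟨u, v, huv⟩ := hcop
  -- the idempotent
  set e := Polynomial.aeval a (u * f) with he
  have he' : (1 : A) - e = Polynomial.aeval a (v * g) := by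
    have := congrArg (Polynomial.aeval a) huv
    rw [map_add, map_one] at this
    rw [he, ← this]; ring
  have hee : e * (1 - e) = 0 := by
    rw [he, he', ← map_mul]
    have : u * f * (v * g) = μ * (u * v) := by rw [hfg]; ring
    rw [this, map_mul, hμaeval, zero_mul]
  have he0 : e ≠ 0 := by
    intro h0
    have hdvd : μ ∣ u * f := minpoly.dvd κ a (h0 ▸ he.symm)
    obtain ⟨t, ht⟩ := hdvd
    have hgf : g ∣ u := by
      refine ⟨t, ?_⟩
      have : f * u = f * (g * t) := by
        calc f * u = u * f := mul_comm _ _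
          _ = f * g * t := by rw [← hfg]; exact ht
          _ = f * (g * t) := by ring
      exact mul_left_cancel₀ hf0 this
    have : g ∣ 1 := huv ▸ dvd_add (hgf.mul_right f) (dvd_mul_left g v)
    exact hgu (isUnit_of_dvd_one this)
  have he1 : e ≠ 1 := by
    intro h1
    have : Polynomial.aeval a (v * g) = 0 := by rw [← he', h1]; ring
    have hdvd : μ ∣ v * g := minpoly.dvd κ a this
    obtain ⟨t, ht⟩ := hdvd
    have hfv : f ∣ v := by
      refine ⟨t, ?_⟩
      have : g * v = g * (f * t) := by
        calc g * v = v * g := mul_comm _ _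
          _ = f * g * t := by rw [← hfg]; exact ht
          _ = g * (f * t) := by ring
      exact mul_left_cancel₀ hg0 this
    have : f ∣ 1 := huv ▸ dvd_add (dvd_mul_left f u) (hfv.mul_right g)
    exact hfu (isUnit_of_dvd_one this)
  have hebot : e ∉ (⊥ : Subalgebra κ A) := by
    intro hb
    obtain ⟨c, hc⟩ := Algebra.mem_bot.1 hb
    have : algebraMap κ A (c * (1 - c)) = 0 := by
      rw [map_mul, map_sub, map_one, hc]
      exact hee
    have hc0 : c * (1 - c) = 0 := hinj (by rw [this, map_zero])
    rcases mul_eq_zero.1 hc0 with h | h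
    · exact he0 (by rw [← hc, h, map_zero])
    · have : c = 1 := by linear_combination -h
      exact he1 (by rw [← hc, this, map_one])
  -- build the algebra hom κ × κ → A
  have hidem : e * e = e := by linear_combination -hee
  let φ : κ × κ →ₐ[κ] A :=
    { toFun := fun p => algebraMap κ A p.1 * (1 - e) + algebraMap κ A p.2 * e
      map_one' := by simp
      map_mul' := by
        intro p q
        simp only [Prod.fst_mul, Prod.snd_mul, map_mul]
        linear_combination (algebraMap κ A p.1 * algebraMap κ A q.2
          + algebraMap κ A p.2 * algebraMap κ A q.1
          - algebraMap κ A p.1 * algebraMap κ A q.1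
          - algebraMap κ A p.2 * algebraMap κ A q.2) * hidem
      map_zero' := by simp
      map_add' := by intro p q; simp only [Prod.fst_add, Prod.snd_add, map_add]; ring
      commutes' := by
        intro c
        show algebraMap κ A c * (1 - e) + algebraMap κ A c * e = _
        ring }
  have hφe : φ (0, 1) = e := by simp [φ]
  have hφinj : Function.Injective φ := by
    rw [injective_iff_map_eq_zero]
    rintro ⟨c, d⟩ h
    simp only [φ, AlgHom.coe_mk, RingHom.coe_mk, MonoidHom.coe_mk, OneHom.coe_mk] at h
    have hd : algebraMap κ A d * e = 0 := by
      have := congrArg (· * e) h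
      simp only [add_mul, mul_assoc, zero_mul] at this
      rw [sub_mul, one_mul, sub_eq_zero.2 hidem.symm] at this
      simp only [mul_zero, zero_add] at this
      rw [hidem] at this
      exact this
    have hd0 : d = 0 := by
      by_contra hd0
      have : IsUnit (algebraMap κ A d) := (isUnit_iff_ne_zero.2 hd0).map _
      obtain ⟨w, hw⟩ := this.exists_left_inv
      have : e = 0 := by
        calc e = 1 * e := (one_mul e).symm
          _ = w * algebraMap κ A d * e := by rw [hw]
          _ = w * (algebraMap κ A d * e) := by ring
          _ = 0 := by rw [hd]; ring
      exact he0 this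
    have hc : algebraMap κ A c * (1 - e) = 0 := by
      rw [hd0] at h; simpa using h
    have hc0 : c = 0 := by
      by_contra hc0
      have : IsUnit (algebraMap κ A c) := (isUnit_iff_ne_zero.2 hc0).map _
      obtain ⟨w, hw⟩ := this.exists_left_inv
      have h1e : (1 : A) - e = 0 := by
        calc (1 : A) - e = 1 * (1 - e) := (one_mul _).symm
          _ = w * algebraMap κ A c * (1 - e) := by rw [hw]
          _ = w * (algebraMap κ A c * (1 - e)) := by ring
          _ = 0 := by rw [hc]; ring
      exact he1 (by linear_combination -h1e)
    simp [hc0, hd0, Prod.ext_iff]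
  have hφsurj : Function.Surjective φ := by
    rcases hsub φ.range with h | h
    · exfalso
      apply hebot
      rw [← h]
      exact ⟨(0, 1), hφe⟩
    · intro x
      have : x ∈ φ.range := h ▸ Algebra.mem_top
      exact this
  exact ⟨(AlgEquiv.ofBijective φ ⟨hφinj, hφsurj⟩).symm⟩
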